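/- Let (a_k) be a positive sequence with a_k \to 0 and \sum_k a_k = \infty, and let c > 0 and r \ge 1. Then there exists a constant c_1 such that for all k \ge 1, \sum_{i=1}^{k} a_i^{r} \exp( -c \sum_{j=i+1}^{k} a_j ) \le c_1. -/

import Mathlib

open Filter

theorem stmt_5 (a : ℕ → ℝ) (c r : ℝ)
    (hpos : ∀ k, 0 < a k) (hlim : Tendsto a atTop (nhds 0)) (hdiv : ¬ Summable a)
    (hc : 0 < c) (hr : 1 ≤ r) :
    ∃ c₁ : ℝ, ∀ k : ℕ, 1 ≤ k →
      ∑ i ∈ Finset.Icc 1 k, (a i) ^ r * Real.exp (-c * ∑ j ∈ Finset.Icc (i + 1) k, a j)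
        ≤ c₁ := by
  obtain ⟨B, hB⟩ : ∃ B, ∀ i, a i ≤ B := by
    obtain ⟨B, hB⟩ := hlim.bddAbove_range
    exact ⟨B, fun i => hB ⟨i, rfl⟩⟩
  set D : ℝ := max 1 B with hD
  have hD1 : (1 : ℝ) ≤ D := le_max_left _ _
  have hDpos : (0 : ℝ) < D := lt_of_lt_of_le one_pos hD1
  have haD : ∀ i, a i ≤ D := fun i => (hB i).trans (le_max_right _ _)
  set M : ℝ := D ^ (r - 1) with hM
  have hMpos : 0 < M := Real.rpow_pos_of_pos hDpos _
  have har : ∀ i, a i ^ r ≤ M * a i := by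
    intro i
    have h1 : a i ^ r = a i ^ (r - 1) * a i := by
      have h := Real.rpow_add (hpos i) (r - 1) 1
      rw [Real.rpow_one, sub_add_cancel] at h
      exact h
    have h2 : a i ^ (r - 1) ≤ M :=
      Real.rpow_le_rpow (hpos i).le (haD i) (by linarith)
    rw [h1]
    exact mul_le_mul_of_nonneg_right h2 (hpos i).le
  set E : ℝ := Real.exp (c * D) with hE
  have hEpos : 0 < E := Real.exp_pos _
  -- key pointwise inequality
  have key : ∀ i, c * a i ≤ E * (1 - Real.exp (-(c * a i))) := by
    intro i
    have h1 : c * a i + 1 ≤ Real.exp (c * a i) := Real.add_one_le_exp _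
    have h2 : Real.exp (c * a i) ≤ E := Real.exp_le_exp.mpr
      (mul_le_mul_of_nonneg_left (haD i) hc.le)
    have h3 : Real.exp (c * a i) * Real.exp (-(c * a i)) = 1 := by
      rw [← Real.exp_add]; simp
    have h4 : Real.exp (-(c * a i)) ≤ 1 := by
      rw [Real.exp_le_one_iff]
      nlinarith [(hpos i), hc]
    nlinarith [Real.exp_pos (c * a i)]
  refine ⟨M * E / c, fun k hk => ?_⟩
  set G : ℕ → ℝ := fun n => Real.exp (-c * ∑ j ∈ Finset.Icc (n + 1) k, a j) with hG
  have hstep : ∀ i ∈ Finset.range k,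
      a (1 + i) ^ r * Real.exp (-c * ∑ j ∈ Finset.Icc (1 + i + 1) k, a j)
        ≤ (M * E / c) * (G (i + 1) - G i) := by
    intro i hi
    have hik : i < k := Finset.mem_range.mp hi
    have hidx : 1 + i = i + 1 := by omega
    rw [hidx]
    have hidx2 : i + 1 + 1 = i + 2 := rfl
    -- split the sum: Icc (i+1) k = insert (i+1) (Icc (i+2) k)
    have hins : Finset.Icc (i + 1) k = insert (i + 1) (Finset.Icc (i + 2) k) := by
      ext x
      simp only [Finset.mem_Icc, Finset.mem_insert]
      omega
    have hGi : G i = Real.exp (-(c * a (i + 1))) * G (i + 1) := by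
      have hsplit : (∑ j ∈ Finset.Icc (i + 1) k, a j)
          = a (i + 1) + ∑ j ∈ Finset.Icc (i + 2) k, a j := by
        rw [hins, Finset.sum_insert (by simp)]
      simp only [hG]
      rw [hsplit, ← Real.exp_add]
      ring_nf
    set S : ℝ := ∑ j ∈ Finset.Icc (i + 2) k, a j with hS
    have hGval : G (i + 1) = Real.exp (-c * S) := rfl
    have hexp_pos : 0 < Real.exp (-c * S) := Real.exp_pos _
    have h1 : a (i + 1) ^ r * Real.exp (-c * S) ≤ M * a (i + 1) * Real.exp (-c * S) :=
      mul_le_mul_of_nonneg_right (har (i + 1)) hexp_pos.le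
    have h2 : c * a (i + 1) ≤ E * (1 - Real.exp (-(c * a (i + 1)))) := key (i + 1)
    have h3 : G (i + 1) - G i = Real.exp (-c * S) * (1 - Real.exp (-(c * a (i + 1)))) := by
      rw [hGi, hGval]; ring
    rw [h3]
    calc a (i + 1) ^ r * Real.exp (-c * S)
        ≤ M * a (i + 1) * Real.exp (-c * S) := h1
      _ ≤ (M * E / c) * (Real.exp (-c * S) * (1 - Real.exp (-(c * a (i + 1))))) := by
          have h4 : (M * Real.exp (-c * S)) * (c * a (i + 1))
              ≤ (M * Real.exp (-c * S)) * (E * (1 - Real.exp (-(c * a (i + 1))))) :=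
            mul_le_mul_of_nonneg_left h2 (by positivity)
          rw [div_mul_eq_mul_div, le_div_iff₀ hc]
          nlinarith [h4]
  have hsum : ∑ i ∈ Finset.Icc 1 k, (a i) ^ r * Real.exp (-c * ∑ j ∈ Finset.Icc (i + 1) k, a j)
      = ∑ i ∈ Finset.range k,
        a (1 + i) ^ r * Real.exp (-c * ∑ j ∈ Finset.Icc (1 + i + 1) k, a j) := by
    rw [← Finset.Ico_add_one_right_eq_Icc, Finset.sum_Ico_eq_sum_range]
    simp
  rw [hsum]
  calc ∑ i ∈ Finset.range k,
        a (1 + i) ^ r * Real.exp (-c * ∑ j ∈ Finset.Icc (1 + i + 1) k, a j)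
      ≤ ∑ i ∈ Finset.range k, (M * E / c) * (G (i + 1) - G i) :=
        Finset.sum_le_sum hstep
    _ = (M * E / c) * (G k - G 0) := by rw [← Finset.mul_sum, Finset.sum_range_sub]
    _ ≤ M * E / c := by
        have hGk : G k = 1 := by simp [hG]
        have hG0 : 0 ≤ G 0 := (Real.exp_pos _).le
        have : 0 < M * E / c := by positivity
        nlinarith
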